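/- For every integer n ≥ 3 and every color k ∈ C = {0,1,...,n−1} there exists a finite simple graph L with two designated vertices x and y and n further pairwise distinct designated vertices r_0,...,r_{n−1} inducing a complete subgraph, such that: (i) every partial assignment σ₀ with σ₀(r_i) = i for all i and σ₀(x) = k extends uniquely to a proper n-coloring of L, and in that coloring y also receives color k; symmetrically, every partial assignment with σ₀(r_i) = i and σ₀(y) = k extends uniquely, and in it x receives color k; in particular, in every proper n-coloring σ of L with σ(r_i) = i for all i, σ(x) = k if and only if σ(y) = k; (ii) for every pair of colors a, b ∈ C \ {k}, the assignment σ₀(x) = a, σ₀(y) = b, σ₀(r_i) = i for all i extends uniquely to a proper n-coloring of L; (iii) L has exactly 4n − 3 vertices and exactly n(7n−11)/2 edges. -/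

import Mathlib

set_option synthInstance.maxSize 2048


/-- A proper `n`-coloring of a simple graph: adjacent vertices get different colors. -/
def IsProperColoring {V : Type} (G : SimpleGraph V) {n : ℕ} (σ : V → Fin n) : Prop :=
  ∀ ⦃u v : V⦄, G.Adj u v → σ u ≠ σ v


namespace Gadget1

abbrev Vt (m : ℕ) := Fin (m+3) ⊕ (Unit ⊕ (Unit ⊕ (Fin (m+2) ⊕ (Fin (m+2) ⊕ Fin m))))

variable {m : ℕ}

def vr (c : Fin (m+3)) : Vt m := Sum.inl c
def vx : Vt m := Sum.inr (Sum.inl ())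
def vy : Vt m := Sum.inr (Sum.inr (Sum.inl ()))
def vA (j : Fin (m+2)) : Vt m := Sum.inr (Sum.inr (Sum.inr (Sum.inl j)))
def vM (j : Fin (m+2)) : Vt m := Sum.inr (Sum.inr (Sum.inr (Sum.inr (Sum.inl j))))
def vP (i : Fin m) : Vt m := Sum.inr (Sum.inr (Sum.inr (Sum.inr (Sum.inr i))))

def ip (i : Fin m) : Fin (m+2) := ⟨i.1+2, by omega⟩

open Finset SimpleGraph

def F1 (m : ℕ) : Finset (Sym2 (Vt m)) :=
  (⊤ : SimpleGraph (Fin (m+3))).edgeFinset.map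
      ⟨Sym2.map vr, Sym2.map.injective Sum.inl_injective⟩
def F2 (m : ℕ) (k : Fin (m+3)) : Finset (Sym2 (Vt m)) :=
  (univ : Finset (Fin (m+2) × Fin (m+1))).image
      (fun p => s(vA p.1, vr (k.succAbove (p.1.succAbove p.2))))
def F3 (m : ℕ) (k : Fin (m+3)) : Finset (Sym2 (Vt m)) :=
  (univ : Finset (Fin (m+2) × Fin (m+1))).image
      (fun p => s(vM p.1, vr (k.succAbove ((p.1+1).succAbove p.2))))
def F4 (m : ℕ) : Finset (Sym2 (Vt m)) :=
  (univ : Finset (Fin (m+2))).image (fun j => s(vx, vA j))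
def F5 (m : ℕ) : Finset (Sym2 (Vt m)) :=
  (univ : Finset (Fin (m+2))).image (fun j => s(vy, vA j))
def F6 (m : ℕ) : Finset (Sym2 (Vt m)) :=
  (univ : Finset (Fin (m+2))).image (fun j => s(vA j, vM j))
def F7 (m : ℕ) : Finset (Sym2 (Vt m)) :=
  (univ : Finset (Fin (m+2))).image (fun j => s(vA (j+1), vM j))
def F8 (m : ℕ) (k : Fin (m+3)) : Finset (Sym2 (Vt m)) :=
  (univ : Finset (Fin m × Fin (m+2))).image
      (fun p => s(vP p.1, vr ((k.succAbove (ip p.1)).succAbove p.2)))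
def F9 (m : ℕ) : Finset (Sym2 (Vt m)) :=
  (univ : Finset (Fin m)).image (fun i => s(vP i, vA 0))

def ES (m : ℕ) (k : Fin (m+3)) : Finset (Sym2 (Vt m)) :=
  F1 m ∪ F2 m k ∪ F3 m k ∪ F4 m ∪ F5 m ∪ F6 m ∪ F7 m ∪ F8 m k ∪ F9 m

def Gr (m : ℕ) (k : Fin (m+3)) : SimpleGraph (Vt m) :=
  SimpleGraph.fromEdgeSet ↑(ES m k)

lemma mem_ES_iff {k : Fin (m+3)} {w : Sym2 (Vt m)} :
    w ∈ ES m k ↔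
      (∃ i j : Fin (m+3), i ≠ j ∧ s(vr i, vr j) = w) ∨
      (∃ j : Fin (m+2), ∃ d : Fin (m+1), s(vA j, vr (k.succAbove (j.succAbove d))) = w) ∨
      (∃ j : Fin (m+2), ∃ d : Fin (m+1), s(vM j, vr (k.succAbove ((j+1).succAbove d))) = w) ∨
      (∃ j : Fin (m+2), s(vx, vA j) = w) ∨
      (∃ j : Fin (m+2), s(vy, vA j) = w) ∨
      (∃ j : Fin (m+2), s(vA j, vM j) = w) ∨
      (∃ j : Fin (m+2), s(vA (j+1), vM j) = w) ∨
      (∃ i : Fin m, ∃ d : Fin (m+2), s(vP i, vr ((k.succAbove (ip i)).succAbove d)) = w) ∨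
      (∃ i : Fin m, s(vP i, vA 0) = w) := by
  simp only [ES, F1, F2, F3, F4, F5, F6, F7, F8, F9, mem_union, mem_image, mem_map, mem_univ,
    true_and, Function.Embedding.coeFn_mk, Sym2.exists, Sym2.map_pair_eq,
    SimpleGraph.mem_edgeFinset, SimpleGraph.mem_edgeSet, top_adj, Prod.exists, or_assoc]


lemma adj_of_mem {k : Fin (m+3)} {u v : Vt m} (h : s(u,v) ∈ ES m k) (hne : u ≠ v) :
    (Gr m k).Adj u v := by
  rw [Gr, SimpleGraph.fromEdgeSet_adj]; exact ⟨h, hne⟩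

lemma adj_rr {k : Fin (m+3)} {i j : Fin (m+3)} (h : i ≠ j) : (Gr m k).Adj (vr i) (vr j) :=
  adj_of_mem (mem_ES_iff.2 (Or.inl ⟨i, j, h, rfl⟩)) (by simp [vr, h])

lemma adj_Ar (k : Fin (m+3)) (j : Fin (m+2)) (d : Fin (m+1)) :
    (Gr m k).Adj (vA j) (vr (k.succAbove (j.succAbove d))) :=
  adj_of_mem (mem_ES_iff.2 (Or.inr (Or.inl ⟨j, d, rfl⟩))) (by simp [vA, vr])

lemma adj_Mr (k : Fin (m+3)) (j : Fin (m+2)) (d : Fin (m+1)) :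
    (Gr m k).Adj (vM j) (vr (k.succAbove ((j+1).succAbove d))) :=
  adj_of_mem (mem_ES_iff.2 (Or.inr (Or.inr (Or.inl ⟨j, d, rfl⟩)))) (by simp [vM, vr])

lemma adj_xA (k : Fin (m+3)) (j : Fin (m+2)) : (Gr m k).Adj vx (vA j) :=
  adj_of_mem (mem_ES_iff.2 (Or.inr (Or.inr (Or.inr (Or.inl ⟨j, rfl⟩))))) (by simp [vx, vA])

lemma adj_yA (k : Fin (m+3)) (j : Fin (m+2)) : (Gr m k).Adj vy (vA j) :=
  adj_of_mem (mem_ES_iff.2 (Or.inr (Or.inr (Or.inr (Or.inr (Or.inl ⟨j, rfl⟩))))))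
    (by simp [vy, vA])

lemma adj_AM (k : Fin (m+3)) (j : Fin (m+2)) : (Gr m k).Adj (vA j) (vM j) :=
  adj_of_mem (mem_ES_iff.2 (Or.inr (Or.inr (Or.inr (Or.inr (Or.inr (Or.inl ⟨j, rfl⟩)))))))
    (by simp [vM, vA])

lemma adj_A1M (k : Fin (m+3)) (j : Fin (m+2)) : (Gr m k).Adj (vA (j+1)) (vM j) :=
  adj_of_mem
    (mem_ES_iff.2 (Or.inr (Or.inr (Or.inr (Or.inr (Or.inr (Or.inr (Or.inl ⟨j, rfl⟩))))))))
    (by simp [vM, vA])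

lemma adj_Pr (k : Fin (m+3)) (i : Fin m) (d : Fin (m+2)) :
    (Gr m k).Adj (vP i) (vr ((k.succAbove (ip i)).succAbove d)) :=
  adj_of_mem
    (mem_ES_iff.2
      (Or.inr (Or.inr (Or.inr (Or.inr (Or.inr (Or.inr (Or.inr (Or.inl ⟨i, d, rfl⟩)))))))))
    (by simp [vP, vr])

lemma adj_PA (k : Fin (m+3)) (i : Fin m) : (Gr m k).Adj (vP i) (vA 0) :=
  adj_of_mem
    (mem_ES_iff.2
      (Or.inr (Or.inr (Or.inr (Or.inr (Or.inr (Or.inr (Or.inr (Or.inr ⟨i, rfl⟩)))))))))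
    (by simp [vP, vA])

lemma isProper_criterion {k : Fin (m+3)} (σ : Vt m → Fin (m+3))
    (h1 : ∀ i j : Fin (m+3), i ≠ j → σ (vr i) ≠ σ (vr j))
    (h2 : ∀ (j : Fin (m+2)) (d : Fin (m+1)), σ (vA j) ≠ σ (vr (k.succAbove (j.succAbove d))))
    (h3 : ∀ (j : Fin (m+2)) (d : Fin (m+1)), σ (vM j) ≠ σ (vr (k.succAbove ((j+1).succAbove d))))
    (h4 : ∀ j, σ vx ≠ σ (vA j))
    (h5 : ∀ j, σ vy ≠ σ (vA j))
    (h6 : ∀ j, σ (vA j) ≠ σ (vM j))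
    (h7 : ∀ j, σ (vA (j+1)) ≠ σ (vM j))
    (h8 : ∀ (i : Fin m) (d : Fin (m+2)), σ (vP i) ≠ σ (vr ((k.succAbove (ip i)).succAbove d)))
    (h9 : ∀ i, σ (vP i) ≠ σ (vA 0)) :
    IsProperColoring (Gr m k) σ := by
  intro u v hadj
  rw [Gr, SimpleGraph.fromEdgeSet_adj, Finset.mem_coe, mem_ES_iff] at hadj
  obtain ⟨hmem, -⟩ := hadj
  rcases hmem with ⟨i, j, hij, hw⟩ | ⟨j, d, hw⟩ | ⟨j, d, hw⟩ | ⟨j, hw⟩ | ⟨j, hw⟩ | ⟨j, hw⟩ |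
    ⟨j, hw⟩ | ⟨i, d, hw⟩ | ⟨i, hw⟩ <;>
      rw [Sym2.eq_iff] at hw <;>
      rcases hw with ⟨rfl, rfl⟩ | ⟨rfl, rfl⟩
  exacts [h1 i j hij, (h1 i j hij).symm, h2 j d, (h2 j d).symm, h3 j d, (h3 j d).symm,
    h4 j, (h4 j).symm, h5 j, (h5 j).symm, h6 j, (h6 j).symm, h7 j, (h7 j).symm,
    h8 i d, (h8 i d).symm, h9 i, (h9 i).symm]

def colK (k : Fin (m+3)) : Vt m → Fin (m+3)
  | Sum.inl c => c
  | Sum.inr (Sum.inl _) => k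
  | Sum.inr (Sum.inr (Sum.inl _)) => k
  | Sum.inr (Sum.inr (Sum.inr (Sum.inl j))) => k.succAbove j
  | Sum.inr (Sum.inr (Sum.inr (Sum.inr (Sum.inl _)))) => k
  | Sum.inr (Sum.inr (Sum.inr (Sum.inr (Sum.inr i)))) => k.succAbove (ip i)

def colab (k a b : Fin (m+3)) : Vt m → Fin (m+3)
  | Sum.inl c => c
  | Sum.inr (Sum.inl _) => a
  | Sum.inr (Sum.inr (Sum.inl _)) => b
  | Sum.inr (Sum.inr (Sum.inr (Sum.inl _))) => k
  | Sum.inr (Sum.inr (Sum.inr (Sum.inr (Sum.inl j)))) => k.succAbove (j+1)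
  | Sum.inr (Sum.inr (Sum.inr (Sum.inr (Sum.inr i)))) => k.succAbove (ip i)

@[simp] lemma colK_r (k : Fin (m+3)) (c) : colK k (vr c) = c := rfl
@[simp] lemma colK_x (k : Fin (m+3)) : colK k (vx : Vt m) = k := rfl
@[simp] lemma colK_y (k : Fin (m+3)) : colK k (vy : Vt m) = k := rfl
@[simp] lemma colK_A (k : Fin (m+3)) (j) : colK k (vA j) = k.succAbove j := rfl
@[simp] lemma colK_M (k : Fin (m+3)) (j) : colK k (vM j) = k := rfl
@[simp] lemma colK_P (k : Fin (m+3)) (i) : colK k (vP i) = k.succAbove (ip i) := rfl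

@[simp] lemma colab_r (k a b : Fin (m+3)) (c) : colab k a b (vr c) = c := rfl
@[simp] lemma colab_x (k a b : Fin (m+3)) : colab k a b (vx : Vt m) = a := rfl
@[simp] lemma colab_y (k a b : Fin (m+3)) : colab k a b (vy : Vt m) = b := rfl
@[simp] lemma colab_A (k a b : Fin (m+3)) (j) : colab k a b (vA j) = k := rfl
@[simp] lemma colab_M (k a b : Fin (m+3)) (j) : colab k a b (vM j) = k.succAbove (j+1) := rfl
@[simp] lemma colab_P (k a b : Fin (m+3)) (i) : colab k a b (vP i) = k.succAbove (ip i) := rfl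

lemma ip_ne_zero (i : Fin m) : ip i ≠ 0 := by simp [ip, Fin.ext_iff]

lemma isProper_colK (k : Fin (m+3)) : IsProperColoring (Gr m k) (colK k) := by
  apply isProper_criterion
  · intro i j h; simpa using h
  · intro j d
    simpa using Fin.succAbove_right_injective.ne (Fin.ne_succAbove j d)
  · intro j d; simpa using Fin.ne_succAbove k _
  · intro j; simpa using Fin.ne_succAbove k j
  · intro j; simpa using Fin.ne_succAbove k j
  · intro j; simpa using Fin.succAbove_ne k j
  · intro j; simpa using Fin.succAbove_ne k (j+1)
  · intro i d; simpa using Fin.ne_succAbove (k.succAbove (ip i)) d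
  · intro i
    simpa using (Fin.succAbove_right_injective (p := k)).ne (ip_ne_zero i)

lemma isProper_colab (k a b : Fin (m+3)) (ha : a ≠ k) (hb : b ≠ k) :
    IsProperColoring (Gr m k) (colab k a b) := by
  apply isProper_criterion
  · intro i j h; simpa using h
  · intro j d; simpa using Fin.ne_succAbove k _
  · intro j d
    simpa using Fin.succAbove_right_injective.ne (Fin.ne_succAbove (j+1) d)
  · intro j; simpa using ha
  · intro j; simpa using hb
  · intro j; simpa using Fin.ne_succAbove k (j+1)
  · intro j; simpa using Fin.ne_succAbove k (j+1)
  · intro i d; simpa using Fin.ne_succAbove (k.succAbove (ip i)) d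
  · intro i; simpa using Fin.succAbove_ne k (ip i)


section Uniqueness

variable {m : ℕ} {k : Fin (m+3)} {σ : Vt m → Fin (m+3)}

lemma dom_A (hp : IsProperColoring (Gr m k) σ) (hr : ∀ i, σ (vr i) = i) (j : Fin (m+2)) :
    σ (vA j) = k.succAbove j ∨ σ (vA j) = k := by
  by_contra h
  push_neg at h
  obtain ⟨h1, h2⟩ := h
  obtain ⟨t, ht⟩ := Fin.exists_succAbove_eq h2
  have htj : t ≠ j := by rintro rfl; exact h1 ht.symm
  obtain ⟨d, hd⟩ := Fin.exists_succAbove_eq htj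
  exact hp (adj_Ar k j d) (by rw [hr, hd, ht])

lemma dom_M (hp : IsProperColoring (Gr m k) σ) (hr : ∀ i, σ (vr i) = i) (j : Fin (m+2)) :
    σ (vM j) = k ∨ σ (vM j) = k.succAbove (j+1) := by
  by_contra h
  push_neg at h
  obtain ⟨h1, h2⟩ := h
  obtain ⟨t, ht⟩ := Fin.exists_succAbove_eq h1
  have htj : t ≠ j + 1 := by rintro rfl; exact h2 ht.symm
  obtain ⟨d, hd⟩ := Fin.exists_succAbove_eq htj
  exact hp (adj_Mr k j d) (by rw [hr, hd, ht])

lemma val_P (hp : IsProperColoring (Gr m k) σ) (hr : ∀ i, σ (vr i) = i) (i : Fin m) :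
    σ (vP i) = k.succAbove (ip i) := by
  by_contra h
  obtain ⟨d, hd⟩ := Fin.exists_succAbove_eq h
  exact hp (adj_Pr k i d) (by rw [hr, hd])

lemma valsK (hp : IsProperColoring (Gr m k) σ) (hr : ∀ i, σ (vr i) = i) (hx : σ vx = k) :
    (∀ j, σ (vA j) = k.succAbove j) ∧ (∀ j, σ (vM j) = k) ∧ σ vy = k := by
  have hA : ∀ j, σ (vA j) = k.succAbove j := fun j =>
    (dom_A hp hr j).resolve_right fun h => absurd (by rw [hx, h]) (hp (adj_xA k j))
  have hM : ∀ j, σ (vM j) = k := fun j =>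
    (dom_M hp hr j).resolve_right fun h => absurd (by rw [hA (j+1), h]) (hp (adj_A1M k j))
  refine ⟨hA, hM, ?_⟩
  by_contra h
  obtain ⟨t, ht⟩ := Fin.exists_succAbove_eq h
  exact hp (adj_yA k t) (by rw [hA t]; exact ht.symm)

open Fin.NatCast in
lemma valsab (hp : IsProperColoring (Gr m k) σ) (hr : ∀ i, σ (vr i) = i) (hx : σ vx ≠ k) :
    (∀ j, σ (vA j) = k) ∧ (∀ j, σ (vM j) = k.succAbove (j+1)) ∧ σ vy ≠ k := by
  obtain ⟨j₀, hj₀⟩ := Fin.exists_succAbove_eq hx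
  have base : σ (vA j₀) = k :=
    (dom_A hp hr j₀).resolve_left fun h =>
      absurd (by rw [h]; exact hj₀.symm) (hp (adj_xA k j₀))
  have step : ∀ j, σ (vA j) = k → σ (vA (j+1)) = k := by
    intro j hAj
    have hMj : σ (vM j) = k.succAbove (j+1) :=
      (dom_M hp hr j).resolve_left fun h => absurd (by rw [hAj, h]) (hp (adj_AM k j))
    exact (dom_A hp hr (j+1)).resolve_left fun h =>
      absurd (by rw [h, hMj]) (hp (adj_A1M k j))
  have hAt : ∀ t : ℕ, σ (vA (j₀ + (t : Fin (m+2)))) = k := by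
    intro t
    induction t with
    | zero => simpa using base
    | succ t ih =>
      have h2 := step _ ih
      rw [Nat.cast_add_one, ← add_assoc]
      exact h2
  have hA : ∀ j, σ (vA j) = k := by
    intro j
    have h3 := hAt (j - j₀).val
    rwa [Fin.cast_val_eq_self, show j₀ + (j - j₀) = j by abel] at h3
  have hM : ∀ j, σ (vM j) = k.succAbove (j+1) := fun j =>
    (dom_M hp hr j).resolve_left fun h => absurd (by rw [hA j, h]) (hp (adj_AM k j))
  exact ⟨hA, hM, fun h => hp (adj_yA k 0) (by rw [h, hA 0])⟩

lemma eq_colK (hp : IsProperColoring (Gr m k) σ) (hr : ∀ i, σ (vr i) = i) (hx : σ vx = k) :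
    σ = colK k := by
  obtain ⟨hA, hM, hy⟩ := valsK hp hr hx
  funext v
  rcases v with c | u | u | j | j | i
  · exact hr c
  · exact hx
  · exact hy
  · exact hA j
  · exact hM j
  · exact val_P hp hr i

lemma eq_colab (hp : IsProperColoring (Gr m k) σ) (hr : ∀ i, σ (vr i) = i) (hx : σ vx ≠ k) :
    σ = colab k (σ vx) (σ vy) := by
  obtain ⟨hA, hM, hy⟩ := valsab hp hr hx
  funext v
  rcases v with c | u | u | j | j | i
  · exact hr c
  · rfl
  · rfl
  · exact hA j
  · exact hM j
  · exact val_P hp hr i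

end Uniqueness

section Counting

open Finset SimpleGraph

variable {m : ℕ}

def tg : Vt m → Fin 6
  | Sum.inl _ => 0
  | Sum.inr (Sum.inl _) => 1
  | Sum.inr (Sum.inr (Sum.inl _)) => 2
  | Sum.inr (Sum.inr (Sum.inr (Sum.inl _))) => 3
  | Sum.inr (Sum.inr (Sum.inr (Sum.inr (Sum.inl _)))) => 4
  | Sum.inr (Sum.inr (Sum.inr (Sum.inr (Sum.inr _)))) => 5

lemma disj_of_sig {s t : Finset (Sym2 (Vt m))} {a b : Sym2 (Fin 6)}
    (hs : ∀ w ∈ s, Sym2.map tg w = a) (ht : ∀ w ∈ t, Sym2.map tg w = b) (hab : a ≠ b) :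
    Disjoint s t :=
  Finset.disjoint_left.2 fun w hw hw' => hab (((hs w hw).symm).trans (ht w hw'))

lemma sig_F1 : ∀ w ∈ F1 m, Sym2.map tg w = s((0 : Fin 6), (0 : Fin 6)) := by
  intro w hw
  simp only [F1, mem_map, Function.Embedding.coeFn_mk] at hw
  obtain ⟨a, -, rfl⟩ := hw
  rw [Sym2.map_map]
  induction a using Sym2.ind with
  | _ i j => rfl

lemma sig_F2 {k : Fin (m+3)} : ∀ w ∈ F2 m k, Sym2.map tg w = s((3 : Fin 6), (0 : Fin 6)) := by
  intro w hw
  simp only [F2, mem_image, mem_univ, true_and] at hw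
  obtain ⟨a, rfl⟩ := hw
  rfl

lemma sig_F3 {k : Fin (m+3)} : ∀ w ∈ F3 m k, Sym2.map tg w = s((4 : Fin 6), (0 : Fin 6)) := by
  intro w hw
  simp only [F3, mem_image, mem_univ, true_and] at hw
  obtain ⟨a, rfl⟩ := hw
  rfl

lemma sig_F4 : ∀ w ∈ F4 m, Sym2.map tg w = s((1 : Fin 6), (3 : Fin 6)) := by
  intro w hw
  simp only [F4, mem_image, mem_univ, true_and] at hw
  obtain ⟨a, rfl⟩ := hw
  rfl

lemma sig_F5 : ∀ w ∈ F5 m, Sym2.map tg w = s((2 : Fin 6), (3 : Fin 6)) := by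
  intro w hw
  simp only [F5, mem_image, mem_univ, true_and] at hw
  obtain ⟨a, rfl⟩ := hw
  rfl

lemma sig_F6 : ∀ w ∈ F6 m, Sym2.map tg w = s((3 : Fin 6), (4 : Fin 6)) := by
  intro w hw
  simp only [F6, mem_image, mem_univ, true_and] at hw
  obtain ⟨a, rfl⟩ := hw
  rfl

lemma sig_F7 : ∀ w ∈ F7 m, Sym2.map tg w = s((3 : Fin 6), (4 : Fin 6)) := by
  intro w hw
  simp only [F7, mem_image, mem_univ, true_and] at hw
  obtain ⟨a, rfl⟩ := hw
  rfl

lemma sig_F8 {k : Fin (m+3)} : ∀ w ∈ F8 m k, Sym2.map tg w = s((5 : Fin 6), (0 : Fin 6)) := by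
  intro w hw
  simp only [F8, mem_image, mem_univ, true_and] at hw
  obtain ⟨a, rfl⟩ := hw
  rfl

lemma sig_F9 : ∀ w ∈ F9 m, Sym2.map tg w = s((5 : Fin 6), (3 : Fin 6)) := by
  intro w hw
  simp only [F9, mem_image, mem_univ, true_and] at hw
  obtain ⟨a, rfl⟩ := hw
  rfl

lemma fin_ne_add_one (j : Fin (m+2)) : j ≠ j + 1 := by
  intro h
  have h2 : j + 0 = j + 1 := by rw [add_zero]; exact h
  have h3 : (0 : Fin (m+2)) = 1 := add_left_cancel h2
  have h4 := congrArg Fin.val h3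
  simp [Fin.val_zero, Fin.val_one] at h4

lemma disj_F6_F7 : Disjoint (F6 m) (F7 m) := by
  rw [Finset.disjoint_left]
  intro w h6 h7
  simp only [F6, F7, mem_image, mem_univ, true_and] at h6 h7
  obtain ⟨j, rfl⟩ := h6
  obtain ⟨j', hj'⟩ := h7
  rw [Sym2.eq_iff] at hj'
  rcases hj' with ⟨h1, h2⟩ | ⟨h1, h2⟩
  · have e1 : j' + 1 = j := by simpa [vA] using h1
    have e2 : j' = j := by simpa [vM] using h2
    subst e2
    exact fin_ne_add_one j' e1.symm
  · simp [vA, vM] at h1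

lemma card_F1 : (F1 m).card = (m+3) * (m+2) / 2 := by
  rw [F1, Finset.card_map, SimpleGraph.card_edgeFinset_top_eq_card_choose_two,
    Fintype.card_fin, Nat.choose_two_right]
  rfl

lemma card_F2 {k : Fin (m+3)} : (F2 m k).card = (m+2) * (m+1) := by
  rw [F2, Finset.card_image_of_injective _ ?_, Finset.card_univ, Fintype.card_prod,
    Fintype.card_fin, Fintype.card_fin]
  rintro ⟨p1, p2⟩ ⟨q1, q2⟩ h
  simp only [Sym2.eq_iff, vA, vr, Sum.inr.injEq, Sum.inl.injEq, reduceCtorEq, and_false,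
    false_and, or_false, false_or, and_self, Fin.succAbove_right_inj] at h
  obtain ⟨rfl, h2⟩ := h
  rw [Fin.succAbove_right_inj] at h2
  rw [h2]

lemma card_F3 {k : Fin (m+3)} : (F3 m k).card = (m+2) * (m+1) := by
  rw [F3, Finset.card_image_of_injective _ ?_, Finset.card_univ, Fintype.card_prod,
    Fintype.card_fin, Fintype.card_fin]
  rintro ⟨p1, p2⟩ ⟨q1, q2⟩ h
  simp only [Sym2.eq_iff, vM, vr, Sum.inr.injEq, Sum.inl.injEq, reduceCtorEq, and_false,
    false_and, or_false, false_or, and_self, Fin.succAbove_right_inj] at h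
  obtain ⟨rfl, h2⟩ := h
  rw [Fin.succAbove_right_inj] at h2
  rw [h2]

lemma card_F4 : (F4 m).card = m+2 := by
  rw [F4, Finset.card_image_of_injective _ ?_, Finset.card_univ, Fintype.card_fin]
  intro a b h
  simp only [Sym2.eq_iff, vx, vA, Sum.inr.injEq, Sum.inl.injEq, reduceCtorEq, and_false,
    false_and, or_false, false_or, true_and, and_true] at h
  exact h

lemma card_F5 : (F5 m).card = m+2 := by
  rw [F5, Finset.card_image_of_injective _ ?_, Finset.card_univ, Fintype.card_fin]
  intro a b h
  simpa [Sym2.eq_iff, vy, vA] using h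

lemma card_F6 : (F6 m).card = m+2 := by
  rw [F6, Finset.card_image_of_injective _ ?_, Finset.card_univ, Fintype.card_fin]
  intro a b h
  simp only [Sym2.eq_iff, vA, vM, Sum.inr.injEq, Sum.inl.injEq, reduceCtorEq, and_false,
    false_and, or_false, false_or] at h
  exact h.1

lemma card_F7 : (F7 m).card = m+2 := by
  rw [F7, Finset.card_image_of_injective _ ?_, Finset.card_univ, Fintype.card_fin]
  intro a b h
  simp only [Sym2.eq_iff, vA, vM, Sum.inr.injEq, Sum.inl.injEq, reduceCtorEq, and_false,
    false_and, or_false, false_or] at h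
  exact h.2

lemma card_F8 {k : Fin (m+3)} : (F8 m k).card = m * (m+2) := by
  rw [F8, Finset.card_image_of_injective _ ?_, Finset.card_univ, Fintype.card_prod,
    Fintype.card_fin, Fintype.card_fin]
  rintro ⟨p1, p2⟩ ⟨q1, q2⟩ h
  simp only [Sym2.eq_iff, vP, vr, Sum.inr.injEq, Sum.inl.injEq, reduceCtorEq, and_false,
    false_and, or_false, false_or, and_self] at h
  obtain ⟨rfl, h2⟩ := h
  rw [Fin.succAbove_right_inj] at h2
  rw [h2]

lemma card_F9 : (F9 m).card = m := by
  rw [F9, Finset.card_image_of_injective _ ?_, Finset.card_univ, Fintype.card_fin]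
  intro a b h
  simpa [Sym2.eq_iff, vP, vA] using h

lemma card_ES {k : Fin (m+3)} : (ES m k).card = (m+3) * (7*(m+3) - 11) / 2 := by
  have ne : ∀ a b : Sym2 (Fin 6), a ≠ b → a ≠ b := fun _ _ h => h
  rw [ES]
  rw [Finset.card_union_of_disjoint (by
    simp only [Finset.disjoint_union_left]
    exact ⟨⟨⟨⟨⟨⟨⟨disj_of_sig sig_F1 sig_F9 (by decide),
      disj_of_sig sig_F2 sig_F9 (by decide)⟩,
      disj_of_sig sig_F3 sig_F9 (by decide)⟩,
      disj_of_sig sig_F4 sig_F9 (by decide)⟩,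
      disj_of_sig sig_F5 sig_F9 (by decide)⟩,
      disj_of_sig sig_F6 sig_F9 (by decide)⟩,
      disj_of_sig sig_F7 sig_F9 (by decide)⟩,
      disj_of_sig sig_F8 sig_F9 (by decide)⟩)]
  rw [Finset.card_union_of_disjoint (by
    simp only [Finset.disjoint_union_left]
    exact ⟨⟨⟨⟨⟨⟨disj_of_sig sig_F1 sig_F8 (by decide),
      disj_of_sig sig_F2 sig_F8 (by decide)⟩,
      disj_of_sig sig_F3 sig_F8 (by decide)⟩,
      disj_of_sig sig_F4 sig_F8 (by decide)⟩,
      disj_of_sig sig_F5 sig_F8 (by decide)⟩,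
      disj_of_sig sig_F6 sig_F8 (by decide)⟩,
      disj_of_sig sig_F7 sig_F8 (by decide)⟩)]
  rw [Finset.card_union_of_disjoint (by
    simp only [Finset.disjoint_union_left]
    exact ⟨⟨⟨⟨⟨disj_of_sig sig_F1 sig_F7 (by decide),
      disj_of_sig sig_F2 sig_F7 (by decide)⟩,
      disj_of_sig sig_F3 sig_F7 (by decide)⟩,
      disj_of_sig sig_F4 sig_F7 (by decide)⟩,
      disj_of_sig sig_F5 sig_F7 (by decide)⟩,
      disj_F6_F7⟩)]
  rw [Finset.card_union_of_disjoint (by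
    simp only [Finset.disjoint_union_left]
    exact ⟨⟨⟨⟨disj_of_sig sig_F1 sig_F6 (by decide),
      disj_of_sig sig_F2 sig_F6 (by decide)⟩,
      disj_of_sig sig_F3 sig_F6 (by decide)⟩,
      disj_of_sig sig_F4 sig_F6 (by decide)⟩,
      disj_of_sig sig_F5 sig_F6 (by decide)⟩)]
  rw [Finset.card_union_of_disjoint (by
    simp only [Finset.disjoint_union_left]
    exact ⟨⟨⟨disj_of_sig sig_F1 sig_F5 (by decide),
      disj_of_sig sig_F2 sig_F5 (by decide)⟩,
      disj_of_sig sig_F3 sig_F5 (by decide)⟩,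
      disj_of_sig sig_F4 sig_F5 (by decide)⟩)]
  rw [Finset.card_union_of_disjoint (by
    simp only [Finset.disjoint_union_left]
    exact ⟨⟨disj_of_sig sig_F1 sig_F4 (by decide),
      disj_of_sig sig_F2 sig_F4 (by decide)⟩,
      disj_of_sig sig_F3 sig_F4 (by decide)⟩)]
  rw [Finset.card_union_of_disjoint (by
    simp only [Finset.disjoint_union_left]
    exact ⟨disj_of_sig sig_F1 sig_F3 (by decide),
      disj_of_sig sig_F2 sig_F3 (by decide)⟩)]
  rw [Finset.card_union_of_disjoint (disj_of_sig sig_F1 sig_F2 (by decide))]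
  rw [card_F1, card_F2, card_F3, card_F4, card_F5, card_F6, card_F7, card_F8, card_F9]
  obtain ⟨t, ht⟩ := Nat.even_mul_succ_self (m+2)
  have e3 : (m+3) * (m+2) = m*m + 5*m + 6 := by ring
  have e4 : (m+3) * (7*(m+3) - 11) = 7*(m*m) + 31*m + 30 := by
    have h10 : 7*(m+3) - 11 = 7*m+10 := by omega
    rw [h10]; ring
  have e1 : (m+2) * (m+1) = m*m + 3*m + 2 := by ring
  have e2 : m * (m+2) = m*m + 2*m := by ring
  have ht' : (m+2) * (m+3) = m*m + 5*m + 6 := by ring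
  generalize hq : m*m = q at e1 e2 e3 e4
  omega

end Counting

section Final

open Finset SimpleGraph

variable {m : ℕ}

lemma no_diag {k : Fin (m+3)} : ∀ w ∈ ES m k, ¬ w.IsDiag := by
  intro w hw
  rw [mem_ES_iff] at hw
  rcases hw with ⟨i, j, hij, rfl⟩ | ⟨j, d, rfl⟩ | ⟨j, d, rfl⟩ | ⟨j, rfl⟩ | ⟨j, rfl⟩ | ⟨j, rfl⟩ |
    ⟨j, rfl⟩ | ⟨i, d, rfl⟩ | ⟨i, rfl⟩ <;>
    simp [Sym2.mk_isDiag_iff, vr, vx, vy, vA, vM, vP]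
  exact hij

lemma edgeSet_Gr {k : Fin (m+3)} : (Gr m k).edgeSet = ↑(ES m k) := by
  rw [Gr, edgeSet_fromEdgeSet]
  ext w
  simp only [Set.mem_diff, Set.mem_setOf_eq, Finset.mem_coe]
  exact ⟨fun h => h.1, fun h => ⟨h, no_diag w h⟩⟩

def edgeFT (m : ℕ) (k : Fin (m+3)) : Fintype (Gr m k).edgeSet :=
  Fintype.ofFinset (ES m k) (fun w => by rw [edgeSet_Gr]; exact Iff.rfl)

lemma card_edge {k : Fin (m+3)} :
    @Fintype.card _ (edgeFT m k) = (m+3) * (7*(m+3) - 11) / 2 :=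
  (Fintype.card_ofFinset _ _).trans card_ES

lemma card_Vt : Fintype.card (Vt m) = 4*(m+3) - 3 := by
  simp only [Fintype.card_sum, Fintype.card_fin, Fintype.card_unit]
  omega

end Final

end Gadget1

/-- For every `n ≥ 3` and every color `k ∈ {0,…,n-1}` there is a finite simple graph `L`
with designated vertices `x`, `y` and pairwise distinct reference vertices `r 0, …, r (n-1)`
inducing a complete subgraph, such that:
(i) the partial assignment `r i ↦ i`, `x ↦ k` extends uniquely to a proper `n`-coloring, in
which `y` gets color `k` as well (and symmetrically with the roles of `x` and `y` swapped);
in particular in every proper `n`-coloring `σ` with `σ (r i) = i`, `σ x = k ↔ σ y = k`;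
(ii) for all colors `a, b ≠ k`, the assignment `r i ↦ i`, `x ↦ a`, `y ↦ b` extends uniquely
to a proper `n`-coloring;
(iii) `L` has exactly `4n − 3` vertices and `n(7n−11)/2` edges. -/
theorem statement1 (n : ℕ) (hn : 3 ≤ n) (k : Fin n) :
    ∃ (V : Type) (_ : Fintype V) (G : SimpleGraph V) (x y : V) (r : Fin n → V)
      (hE : Fintype G.edgeSet),
      Function.Injective r ∧
      (∀ i j : Fin n, i ≠ j → G.Adj (r i) (r j)) ∧
      -- (i)
      (∃! σ : V → Fin n, IsProperColoring G σ ∧ (∀ i, σ (r i) = i) ∧ σ x = k) ∧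
      (∃! σ : V → Fin n, IsProperColoring G σ ∧ (∀ i, σ (r i) = i) ∧ σ y = k) ∧
      (∀ σ : V → Fin n, IsProperColoring G σ → (∀ i, σ (r i) = i) →
        (σ x = k ↔ σ y = k)) ∧
      -- (ii)
      (∀ a b : Fin n, a ≠ k → b ≠ k →
        ∃! σ : V → Fin n,
          IsProperColoring G σ ∧ (∀ i, σ (r i) = i) ∧ σ x = a ∧ σ y = b) ∧
      -- (iii)
      Fintype.card V = 4 * n - 3 ∧
      @Fintype.card G.edgeSet hE = n * (7 * n - 11) / 2 := by
  obtain ⟨m, rfl⟩ : ∃ m, n = m + 3 := ⟨n - 3, by omega⟩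
  refine ⟨Gadget1.Vt m, inferInstance, Gadget1.Gr m k, Gadget1.vx, Gadget1.vy, Gadget1.vr,
    Gadget1.edgeFT m k, Sum.inl_injective, fun i j h => Gadget1.adj_rr h, ?_, ?_, ?_, ?_, ?_, ?_⟩
  · exact ⟨Gadget1.colK k, ⟨Gadget1.isProper_colK k, fun i => rfl, rfl⟩,
      fun σ ⟨hp, hr, hx⟩ => Gadget1.eq_colK hp hr hx⟩
  · refine ⟨Gadget1.colK k, ⟨Gadget1.isProper_colK k, fun i => rfl, rfl⟩, ?_⟩
    rintro σ ⟨hp, hr, hy⟩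
    by_cases hx : σ Gadget1.vx = k
    · exact Gadget1.eq_colK hp hr hx
    · exact absurd hy (Gadget1.valsab hp hr hx).2.2
  · intro σ hp hr
    constructor
    · intro hx; exact (Gadget1.valsK hp hr hx).2.2
    · intro hy; by_contra hx; exact (Gadget1.valsab hp hr hx).2.2 hy
  · intro a b ha hb
    refine ⟨Gadget1.colab k a b, ⟨Gadget1.isProper_colab k a b ha hb, fun i => rfl, rfl, rfl⟩, ?_⟩
    rintro σ ⟨hp, hr, hxa, hyb⟩
    have hx : σ Gadget1.vx ≠ k := by rw [hxa]; exact ha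
    have h2 := Gadget1.eq_colab hp hr hx
    rw [hxa, hyb] at h2
    exact h2
  · exact Gadget1.card_Vt
  · exact Gadget1.card_edge
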